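/- Let d_B be a special type B partition with Kazhdan–Lusztig data: let c(d_B) be the number of type B2 blocks in its block decomposition, and let Ā(O_B) denote Lusztig's canonical quotient of the component group of the corresponding special nilpotent orbit O_B in so_{2n+1}. Then #Ā(O_B) = 2^{c(d_B)}. Equivalently, using Sommers' description that Ā(O_B) ≅ (Z/2)^q where q + 1 is the number of corners of the Young diagram of d_B having both odd length and odd height: the number of such corners equals c(d_B) + 1. -/

import Mathlib

/-- `[b₁, b₁, b₂, b₂, ...]`: each entry of `bs` doubled. -/
def pairList (bs : List ℕ) : List ℕ := bs.flatMap fun b => [b, b]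

/-- Type B1 block: `[a, a]` with `a` odd. -/
def IsB1 (T : List ℕ) : Prop := ∃ a, Odd a ∧ T = [a, a]

/-- Type B1* block: `[b, b]` with `b` even (and positive). -/
def IsB1s (T : List ℕ) : Prop := ∃ b, 0 < b ∧ Even b ∧ T = [b, b]

/-- Type B2 block: `[a₁, b₁², ..., b_k², a₂]` with `a₁, a₂` odd, all `b_j` even,
`a₁ > b₁ ≥ ... ≥ b_k > a₂` and `k ≥ 0`. -/
def IsB2 (T : List ℕ) : Prop :=
  ∃ a₁ a₂ bs, Odd a₁ ∧ Odd a₂ ∧ a₂ < a₁ ∧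
    (∀ b ∈ bs, Even b ∧ a₂ < b ∧ b < a₁) ∧ List.Pairwise (· ≥ ·) bs ∧
    T = a₁ :: (pairList bs ++ [a₂])

/-- Type B3 block: `[a, b₁², ..., b_k²]` with `a` odd, all `b_j` even (positive),
`a > b₁ ≥ ... ≥ b_k`, `k ≥ 0`. -/
def IsB3 (T : List ℕ) : Prop :=
  ∃ a bs, Odd a ∧ (∀ b ∈ bs, 0 < b ∧ Even b ∧ b < a) ∧ List.Pairwise (· ≥ ·) bs ∧
    T = a :: pairList bs

/-- A type B partition of `N`, as a weakly decreasing list of positive integers summing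
to `N` in which every even part occurs with even multiplicity. -/
def IsTypeBList (d : List ℕ) (N : ℕ) : Prop :=
  List.Pairwise (· ≥ ·) d ∧ (∀ x ∈ d, 0 < x) ∧ d.sum = N ∧
    ∀ i, Even i → Even (d.count i)

/-- `Ts` is a decomposition of `d` into consecutive blocks of types B1, B1*, B2, B3. -/
def IsBlockDecomp (d : List ℕ) (Ts : List (List ℕ)) : Prop :=
  d = Ts.flatten ∧ ∀ T ∈ Ts, IsB1 T ∨ IsB1s T ∨ IsB2 T ∨ IsB3 T

/-- The block of type B3 appears exactly once, and at the end. -/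
def B3AtEnd (Ts : List (List ℕ)) : Prop :=
  ∃ Ts' T, Ts = Ts' ++ [T] ∧ IsB3 T ∧ ∀ T' ∈ Ts', ¬ IsB3 T'


/-- The transpose (dual) partition of a list partition. -/
def transposeL (d : List ℕ) : List ℕ :=
  (List.range d.headI).map fun i => d.countP fun x => decide (i + 1 ≤ x)

/- ----------------------------------------------------------------
   Auxiliary lemmas
---------------------------------------------------------------- -/

lemma list_length_eq_sum_count (l : List ℕ) :
    l.length = ∑ a ∈ l.toFinset, l.count a := by
  simpa using (Multiset.toFinset_sum_count_eq (l : Multiset ℕ)).symm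

lemma even_countP_of_even_counts (d : List ℕ) (p : ℕ → Bool)
    (hc : ∀ i, p i = true → Even (d.count i)) :
    Even (d.countP p) := by
  rw [List.countP_eq_length_filter, list_length_eq_sum_count]
  apply Finset.even_sum
  intro i hi
  rw [List.toFinset_filter, Finset.mem_filter] at hi
  simp only [List.count_filter, hi.2, if_true]
  exact hc i hi.2

lemma countP_split (l : List ℕ) (p q : ℕ → Bool) :
    l.countP p = l.countP (fun x => p x && q x) + l.countP (fun x => p x && !q x) := by
  induction l with
  | nil => simp
  | cons a l ih =>
    simp only [List.countP_cons, ih]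
    cases hq : q a <;> cases hp : p a <;> simp <;> omega

lemma countP_eq_sum_map {α : Type*} (l : List α) (p : α → Prop) [DecidablePred p] :
    l.countP (fun x => decide (p x)) = (l.map fun x => if p x then 1 else 0).sum := by
  induction l with
  | nil => simp
  | cons a l ih => by_cases h : p a <;> simp [List.countP_cons, h, ih] <;> omega

lemma card_fin_filter {α : Type*} (l : List α) (p : α → Prop) [DecidablePred p] :
    Nat.card {i : Fin l.length // p (l.get i)} = l.countP (fun x => decide (p x)) := by
  rw [Nat.card_eq_fintype_card, Fintype.card_subtype, Finset.card_filter,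
    countP_eq_sum_map, ← Fin.sum_univ_fun_getElem l (fun x => if p x then 1 else 0)]
  simp [List.get_eq_getElem]

lemma nat_card_finset (s : Finset ℕ) (P : ℕ → Prop) (h : ∀ v, P v ↔ v ∈ s) :
    Nat.card {v : ℕ // P v} = s.card := by
  rw [Nat.card_congr (Equiv.subtypeEquivRight h), Nat.card_eq_finsetCard]

/- ----------------------------------------------------------------
   Facts about blocks
---------------------------------------------------------------- -/

lemma mem_pairList {x : ℕ} {bs : List ℕ} : x ∈ pairList bs ↔ x ∈ bs := by
  simp [pairList, List.mem_flatMap]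

lemma length_pairList (bs : List ℕ) : (pairList bs).length = 2 * bs.length := by
  induction bs with
  | nil => simp [pairList]
  | cons b bs ih => simp [pairList] at ih ⊢; omega

lemma filter_pairList_even {bs : List ℕ} (h : ∀ b ∈ bs, Even b) :
    (pairList bs).filter (fun x => decide (Odd x)) = [] := by
  rw [List.filter_eq_nil_iff]
  intro x hx
  simpa [Nat.not_odd_iff_even] using h x (mem_pairList.mp hx)

lemma filter_B2 {T : List ℕ} (h : IsB2 T) :
    ∃ x y, y < x ∧ T.filter (fun x => decide (Odd x)) = [x, y] := by
  obtain ⟨a₁, a₂, bs, h₁, h₂, hlt, hbs, -, rfl⟩ := h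
  refine ⟨a₁, a₂, hlt, ?_⟩
  rw [List.filter_cons, List.filter_append, filter_pairList_even (fun b hb => (hbs b hb).1)]
  simp [h₁, h₂]

lemma filter_B1 {T : List ℕ} (h : IsB1 T) :
    ∃ z, T.filter (fun x => decide (Odd x)) = [z, z] := by
  obtain ⟨a, ha, rfl⟩ := h
  exact ⟨a, by simp [ha]⟩

lemma filter_B1s {T : List ℕ} (h : IsB1s T) :
    T.filter (fun x => decide (Odd x)) = [] := by
  obtain ⟨b, -, hb, rfl⟩ := h
  simp [Nat.not_odd_iff_even.mpr hb]

lemma filter_B3 {T : List ℕ} (h : IsB3 T) :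
    ∃ a, T.filter (fun x => decide (Odd x)) = [a] := by
  obtain ⟨a, bs, ha, hbs, -, rfl⟩ := h
  refine ⟨a, ?_⟩
  rw [List.filter_cons, filter_pairList_even (fun b hb => (hbs b hb).2.1)]
  simp [ha]

lemma not_isB2_B1 {T : List ℕ} (h : IsB1 T) : ¬ IsB2 T := by
  obtain ⟨a, ha, rfl⟩ := h
  rintro ⟨a₁, a₂, bs, h₁, h₂, hlt, hbs, -, hT⟩
  have hbs0 : bs = [] := by
    have := congrArg List.length hT
    simpa [length_pairList] using this
  subst hbs0
  simp [pairList] at hT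
  omega

lemma not_isB2_B1s {T : List ℕ} (h : IsB1s T) : ¬ IsB2 T := by
  obtain ⟨b, -, hb, rfl⟩ := h
  rintro ⟨a₁, a₂, bs, h₁, h₂, hlt, hbs, -, hT⟩
  have : b = a₁ := by simpa using congrArg (·.headI) hT
  subst this
  exact (Nat.not_odd_iff_even.mpr hb) h₁

lemma not_isB2_B3 {T : List ℕ} (h : IsB3 T) : ¬ IsB2 T := by
  obtain ⟨a, bs, ha, hbs, -, rfl⟩ := h
  rintro ⟨a₁, a₂, bs', h₁, h₂, hlt, hbs', -, hT⟩
  have htail : pairList bs = pairList bs' ++ [a₂] := by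
    simpa using congrArg List.tail hT
  have : a₂ ∈ pairList bs := by rw [htail]; simp
  have := (hbs a₂ (mem_pairList.mp this)).2.1
  exact (Nat.not_odd_iff_even.mpr this) h₂

lemma filter_flatten' (L : List (List ℕ)) (p : ℕ → Bool) :
    L.flatten.filter p = (L.map (·.filter p)).flatten := by
  induction L with
  | nil => simp
  | cons l L ih => simp [List.filter_append, ih]

/- ----------------------------------------------------------------
   The core counting lemma
---------------------------------------------------------------- -/

def strictPair : List ℕ → Bool
  | [x, y] => decide (y < x)
  | _ => false

noncomputable def cornerSet (o : List ℕ) : Finset ℕ :=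
  o.toFinset.filter fun v => Odd (o.countP fun w => decide (v ≤ w))

lemma core (a : ℕ) : ∀ (L : List (List ℕ)),
    (∀ l ∈ L, l = [] ∨ ∃ x y, l = [x, y]) →
    List.Pairwise (· ≥ ·) (L.flatten ++ [a]) →
    (cornerSet (L.flatten ++ [a])).card = L.countP strictPair + 1
  | [] => by
    intro _ _
    simp [cornerSet, List.countP_cons, Finset.filter_singleton]
  | l :: L => by
    intro hL hs
    have ih := core a L (fun m hm => hL m (by simp [hm]))
    rcases hL l (by simp) with rfl | ⟨x, y, rfl⟩
    · simpa [strictPair, List.countP_cons] using ih (by simpa using hs)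
    · set o' : List ℕ := L.flatten ++ [a] with ho'
      have hO : ([x, y] :: L).flatten ++ [a] = x :: y :: o' := by simp [ho']
      rw [hO] at hs ⊢
      rw [List.pairwise_cons] at hs
      obtain ⟨hx, hs⟩ := hs
      rw [List.pairwise_cons] at hs
      obtain ⟨hy, hs'⟩ := hs
      have hxy : y ≤ x := hx y (by simp)
      have hwy : ∀ w ∈ o', w ≤ y := hy
      have hwx : ∀ w ∈ o', w ≤ x := fun w hw => (hwy w hw).trans hxy
      have ihs := ih hs'
      have hcnt : ∀ v, (x :: y :: o').countP (fun w => decide (v ≤ w)) =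
          o'.countP (fun w => decide (v ≤ w))
            + (if v ≤ y then 1 else 0) + (if v ≤ x then 1 else 0) := by
        intro v
        simp only [List.countP_cons, decide_eq_true_eq]
      have hzero : ∀ v, v ∉ o' → (∀ w ∈ o', w ≤ v) →
          (o'.countP fun w => decide (v ≤ w)) = 0 := by
        intro v hne hub
        rw [List.countP_eq_zero]
        intro w hw
        simp only [decide_eq_true_eq]
        intro hvw
        exact hne ((le_antisymm (hub w hw) hvw) ▸ hw)
      rcases eq_or_lt_of_le hxy with heq | hlt
      · -- x = y : cornerSet unchanged
        have hset : cornerSet (x :: y :: o') = cornerSet o' := by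
          ext v
          simp only [cornerSet, Finset.mem_filter, List.mem_toFinset, List.mem_cons]
          constructor
          · rintro ⟨hv, hodd⟩
            have hvy : v ≤ y := by
              rcases hv with rfl | rfl | hv
              · exact heq.ge
              · exact le_refl _
              · exact hwy v hv
            have hodd' : Odd (o'.countP fun w => decide (v ≤ w)) := by
              rw [Nat.odd_iff] at hodd ⊢
              rw [hcnt v, if_pos hvy, if_pos (hvy.trans hxy)] at hodd
              omega
            refine ⟨?_, hodd'⟩
            rcases hv with rfl | rfl | hv
            · by_contra hne
              rw [hzero _ hne (fun w hw => (hwy w hw).trans heq.le)] at hodd'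
              simp at hodd'
            · by_contra hne
              rw [hzero _ hne hwy] at hodd'
              simp at hodd'
            · exact hv
          · rintro ⟨hv, hodd⟩
            have hvy : v ≤ y := hwy v hv
            refine ⟨Or.inr (Or.inr hv), ?_⟩
            rw [Nat.odd_iff] at hodd ⊢
            rw [hcnt v, if_pos hvy, if_pos (hvy.trans hxy)]
            omega
        rw [hset, ihs, List.countP_cons]
        simp [strictPair, heq]
      · -- y < x : cornerSet = insert x (cornerSet o')
        have hxno : x ∉ o'.toFinset := by
          simp only [List.mem_toFinset]
          intro hx'
          exact absurd (hwy x hx') (not_le.mpr hlt)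
        have hset : cornerSet (x :: y :: o') = insert x (cornerSet o') := by
          ext v
          simp only [cornerSet, Finset.mem_filter, List.mem_toFinset, List.mem_cons,
            Finset.mem_insert]
          constructor
          · rintro ⟨hv, hodd⟩
            by_cases hvx : v = x
            · exact Or.inl hvx
            right
            have hvy : v ≤ y := by
              rcases hv with rfl | rfl | hv
              · exact absurd rfl hvx
              · exact le_refl _
              · exact hwy v hv
            have hodd' : Odd (o'.countP fun w => decide (v ≤ w)) := by
              rw [Nat.odd_iff] at hodd ⊢
              rw [hcnt v, if_pos hvy, if_pos (hvy.trans hxy)] at hodd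
              omega
            refine ⟨?_, hodd'⟩
            rcases hv with rfl | rfl | hv
            · exact absurd rfl hvx
            · by_contra hne
              rw [hzero _ hne hwy] at hodd'
              simp at hodd'
            · exact hv
          · rintro (rfl | ⟨hv, hodd⟩)
            · refine ⟨Or.inl rfl, ?_⟩
              have h0 : (o'.countP fun w => decide (v ≤ w)) = 0 :=
                hzero _ (fun h => absurd (hwy _ h) (not_le.mpr hlt)) hwx
              rw [Nat.odd_iff, hcnt v, h0, if_neg (not_le.mpr hlt), if_pos (le_refl _)]
            · have hvy : v ≤ y := hwy v hv
              refine ⟨Or.inr (Or.inr hv), ?_⟩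
              rw [Nat.odd_iff] at hodd ⊢
              rw [hcnt v, if_pos hvy, if_pos (hvy.trans hxy)]
              omega
        have hnotmem : x ∉ cornerSet o' := fun h => hxno (Finset.mem_of_mem_filter _ h)
        rw [hset, Finset.card_insert_of_notMem hnotmem, ihs, List.countP_cons]
        simp [strictPair, hlt]

/- ----------------------------------------------------------------
   Main theorem
---------------------------------------------------------------- -/

/-- for a special type B partition `d` of `2n+1` with block decomposition
`Ts`, the number of corners of the Young diagram of `d` having both odd length and odd
height (a corner corresponds to a distinct part value `v`, of length `v` and height
`#{i : d_i ≥ v}`) equals the number of B2 blocks of `Ts` plus one.  By Sommers'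
description, the left-hand side minus one is the `𝔽₂`-rank of Lusztig's canonical
quotient `Ā(O_B)`, so this says `#Ā(O_B) = 2^{c(d_B)}`. -/
theorem stmt18 (n : ℕ) (d : List ℕ) (hd : IsTypeBList d (2 * n + 1))
    (hspec : IsTypeBList (transposeL d) (2 * n + 1))
    (Ts : List (List ℕ)) (hTs : IsBlockDecomp d Ts ∧ B3AtEnd Ts) :
    Nat.card {v : ℕ // v ∈ d ∧ Odd v ∧
        Odd (Nat.card {i : Fin d.length // v ≤ d.get i})}
      = Nat.card {i : Fin Ts.length // IsB2 (Ts.get i)} + 1 := by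
  classical
  obtain ⟨⟨hflat, hblocks⟩, Ts', T₀, rfl, hB3, hnoB3⟩ := hTs
  obtain ⟨hsorted, hpos, hsum, hcount⟩ := hd
  obtain ⟨a0, hfT₀⟩ := filter_B3 hB3
  set f : List ℕ → List ℕ := fun T => T.filter (fun x => decide (Odd x)) with hf
  set o : List ℕ := d.filter (fun x => decide (Odd x)) with ho
  set L : List (List ℕ) := Ts'.map f with hLdef
  have hoL : o = L.flatten ++ [a0] := by
    rw [ho, hflat, List.flatten_append, List.filter_append, filter_flatten']
    simp only [List.flatten_cons, List.flatten_nil, List.append_nil]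
    rw [hfT₀]
  have hosorted : List.Pairwise (· ≥ ·) o := hsorted.filter _
  have hL : ∀ l ∈ L, l = [] ∨ ∃ x y, l = [x, y] := by
    intro l hl
    rw [hLdef, List.mem_map] at hl
    obtain ⟨T, hT, rfl⟩ := hl
    rcases hblocks T (by simp [hT]) with h | h | h | h
    · obtain ⟨z, hz⟩ := filter_B1 h
      exact Or.inr ⟨z, z, hz⟩
    · exact Or.inl (filter_B1s h)
    · obtain ⟨x, y, -, hxy⟩ := filter_B2 h
      exact Or.inr ⟨x, y, hxy⟩
    · exact absurd h (hnoB3 T hT)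
  have hcore := core a0 L hL (hoL ▸ hosorted)
  have hpar : ∀ v : ℕ, Odd v →
      (Odd (d.countP fun w => decide (v ≤ w)) ↔ Odd (o.countP fun w => decide (v ≤ w))) := by
    intro v hv
    have h1 : o.countP (fun w => decide (v ≤ w))
        = d.countP (fun w => decide (v ≤ w) && decide (Odd w)) := by
      rw [ho, List.countP_filter]
    have h2 := countP_split d (fun w => decide (v ≤ w)) (fun w => decide (Odd w))
    have h3 : Even (d.countP (fun w => decide (v ≤ w) && !decide (Odd w))) := by
      apply even_countP_of_even_counts
      intro i hi
      apply hcount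
      simp only [Bool.and_eq_true, Bool.not_eq_true', decide_eq_false_iff_not] at hi
      exact Nat.not_odd_iff_even.mp hi.2
    rw [Nat.odd_iff, Nat.odd_iff, h1]
    obtain ⟨k, hk⟩ := h3
    omega
  have hLHS : Nat.card {v : ℕ // v ∈ d ∧ Odd v ∧
      Odd (Nat.card {i : Fin d.length // v ≤ d.get i})} = (cornerSet o).card := by
    apply nat_card_finset
    intro v
    rw [cornerSet, Finset.mem_filter, List.mem_toFinset, ho, List.mem_filter]
    have hin := card_fin_filter d (fun x => v ≤ x)
    constructor
    · rintro ⟨hvd, hvodd, hodd⟩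
      rw [hin] at hodd
      exact ⟨⟨hvd, by simp [hvodd]⟩, (hpar v hvodd).mp hodd⟩
    · rintro ⟨⟨hvd, hvodd⟩, hodd⟩
      have hvo : Odd v := by simpa using hvodd
      exact ⟨hvd, hvo, by rw [hin]; exact (hpar v hvo).mpr hodd⟩
  have hRHS : Nat.card {i : Fin (Ts' ++ [T₀]).length // IsB2 ((Ts' ++ [T₀]).get i)}
      = L.countP strictPair := by
    rw [card_fin_filter (Ts' ++ [T₀]) IsB2, List.countP_append]
    have h0 : List.countP (fun T => decide (IsB2 T)) [T₀] = 0 := by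
      simp [not_isB2_B3 hB3]
    rw [h0, add_zero, hLdef, List.countP_map]
    apply List.countP_congr
    intro T hT
    rcases hblocks T (by simp [hT]) with h | h | h | h
    · obtain ⟨z, hz⟩ := filter_B1 h
      simp [not_isB2_B1 h, Function.comp, hf, hz, strictPair]
    · simp [not_isB2_B1s h, Function.comp, hf, filter_B1s h, strictPair]
    · obtain ⟨x, y, hlt, hxy⟩ := filter_B2 h
      simp [h, Function.comp, hf, hxy, strictPair, hlt]
    · exact absurd h (hnoB3 T hT)
  rw [hLHS, hRHS, hoL, hcore]
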